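/- arXiv:2602.10012 — 4 statements merged into one kernel-verified Lean document; each statement's English description precedes it below -/
import Mathlib

section
/- If p₁ stochastically dominates p₀ (i.e., Σ_{l≤k} p₁(l) ≤ Σ_{l≤k} p₀(l) for all k, where larger ranks are more desirable), then D(p₁,p₀) ≥ 1/2. -/
open Finset

noncomputable def DOOR {K : ℕ} (p1 p0 : Fin K → ℝ) : ℝ :=
  (∑ k, p1 k * ∑ l ∈ Finset.Iio k, p0 l) + (1 / 2) * ∑ k, p1 k * p0 k

section aux

variable {K : ℕ}

/-- extension of `p : Fin K → ℝ` to `ℕ` by zero. -/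
noncomputable def extζ (p : Fin K → ℝ) : ℕ → ℝ := fun i => if h : i < K then p ⟨i, h⟩ else 0

/-- CDF of the extension -/
noncomputable def cdfζ (p : Fin K → ℝ) : ℕ → ℝ := fun n => ∑ j ∈ Finset.range n, extζ p j

lemma extζ_nonneg {p : Fin K → ℝ} (h : ∀ k, 0 ≤ p k) (i : ℕ) : 0 ≤ extζ p i := by
  unfold extζ; split
  · exact h _
  · exact le_refl 0

lemma extζ_sum_Iio (p : Fin K → ℝ) (k : Fin K) :
    ∑ l ∈ Finset.Iio k, p l = cdfζ p (k : ℕ) := by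
  unfold cdfζ
  rw [← Nat.Iio_eq_range, ← Fin.map_valEmbedding_Iio, Finset.sum_map]
  refine Finset.sum_congr rfl fun l _ => ?_
  simp [extζ, l.isLt]

lemma extζ_sum_Iic (p : Fin K → ℝ) (k : Fin K) :
    ∑ l ∈ Finset.Iic k, p l = cdfζ p ((k : ℕ) + 1) := by
  unfold cdfζ
  have : Finset.range ((k : ℕ) + 1) = Finset.Iic (k : ℕ) := by
    ext i; simp [Nat.lt_succ_iff]
  rw [this, ← Fin.map_valEmbedding_Iic, Finset.sum_map]
  refine Finset.sum_congr rfl fun l _ => ?_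
  simp [extζ, l.isLt]

lemma extζ_sum_univ (p : Fin K → ℝ) :
    ∑ k, p k = ∑ i ∈ Finset.range K, extζ p i := by
  rw [← Fin.sum_univ_eq_sum_range (f := extζ p)]
  refine Finset.sum_congr rfl fun i _ => ?_
  simp [extζ, i.isLt]

lemma cdfζ_succ (p : Fin K → ℝ) (i : ℕ) :
    cdfζ p (i + 1) = cdfζ p i + extζ p i := by
  unfold cdfζ; rw [Finset.sum_range_succ]

/-- double telescoping identity -/
lemma tele (pa pb : Fin K → ℝ) :
    ∑ i ∈ Finset.range K,
      (extζ pa i * cdfζ pb i + extζ pb i * cdfζ pa (i + 1))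
      = (∑ k, pa k) * (∑ k, pb k) := by
  rw [extζ_sum_univ pa, extζ_sum_univ pb]
  have h := Finset.sum_range_sub (f := fun n => cdfζ pa n * cdfζ pb n) K
  have h0 : cdfζ pa 0 * cdfζ pb 0 = 0 := by simp [cdfζ]
  rw [h0, sub_zero] at h
  unfold cdfζ at h ⊢
  rw [← h]
  refine Finset.sum_congr rfl fun i _ => ?_
  simp only [Finset.sum_range_succ]
  ring

end aux

/-- if `p₁` stochastically dominates `p₀` (its CDF is pointwise at most
that of `p₀`), then the DOOR probability is at least 1/2. -/
theorem door_ge_half_of_stochDom {K : ℕ} (p1 p0 : Fin K → ℝ)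
    (h1nonneg : ∀ k, 0 ≤ p1 k) (h0nonneg : ∀ k, 0 ≤ p0 k)
    (h1sum : ∑ k, p1 k = 1) (h0sum : ∑ k, p0 k = 1)
    (hdom : ∀ k : Fin K, ∑ l ∈ Finset.Iic k, p1 l ≤ ∑ l ∈ Finset.Iic k, p0 l) :
    1 / 2 ≤ DOOR p1 p0 := by
  -- CDF dominance for all n ≤ K
  have hdomN : ∀ n, n ≤ K → cdfζ p1 n ≤ cdfζ p0 n := by
    intro n hn
    match n with
    | 0 => simp [cdfζ]
    | m + 1 =>
      have hm : m < K := hn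
      have := hdom ⟨m, hm⟩
      rwa [extζ_sum_Iic, extζ_sum_Iic] at this
  -- DOOR rewritten over ℕ-ranges
  have hD : DOOR p1 p0 =
      ∑ i ∈ Finset.range K, extζ p1 i * cdfζ p0 i
        + (1 / 2) * ∑ i ∈ Finset.range K, extζ p1 i * extζ p0 i := by
    unfold DOOR
    congr 1
    · rw [extζ_sum_univ (fun k => p1 k * ∑ l ∈ Finset.Iio k, p0 l)]
      refine Finset.sum_congr rfl fun i hi => ?_
      have hiK : i < K := Finset.mem_range.mp hi
      have := extζ_sum_Iio p0 ⟨i, hiK⟩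
      simp only [extζ, hiK, dif_pos]
      rw [this]
    · congr 1
      rw [extζ_sum_univ (fun k => p1 k * p0 k)]
      refine Finset.sum_congr rfl fun i hi => ?_
      have hiK : i < K := Finset.mem_range.mp hi
      simp [extζ, hiK]
  have hA := tele p1 p0
  have hB := tele p0 p1
  have hC := tele p0 p0
  simp only [h1sum, h0sum, one_mul, mul_one] at hA hB hC
  rw [Finset.sum_add_distrib] at hA hB hC
  have s1 : ∑ i ∈ Finset.range K, extζ p0 i * cdfζ p1 (i + 1)
      ≤ ∑ i ∈ Finset.range K, extζ p0 i * cdfζ p0 (i + 1) :=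
    Finset.sum_le_sum fun i hi =>
      mul_le_mul_of_nonneg_left (hdomN _ (Finset.mem_range.mp hi)) (extζ_nonneg h0nonneg i)
  have s2 : ∑ i ∈ Finset.range K, extζ p0 i * cdfζ p1 i
      ≤ ∑ i ∈ Finset.range K, extζ p0 i * cdfζ p0 i :=
    Finset.sum_le_sum fun i hi =>
      mul_le_mul_of_nonneg_left (hdomN _ (le_of_lt (Finset.mem_range.mp hi)))
        (extζ_nonneg h0nonneg i)
  have hg : ∑ i ∈ Finset.range K, extζ p1 i * cdfζ p0 (i + 1)
      = ∑ i ∈ Finset.range K, extζ p1 i * cdfζ p0 i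
        + ∑ i ∈ Finset.range K, extζ p1 i * extζ p0 i := by
    rw [← Finset.sum_add_distrib]
    refine Finset.sum_congr rfl fun i _ => ?_
    rw [cdfζ_succ]; ring
  rw [hD]
  linarith
end

section
/- Double robustness (propensity model correct): if π(X) = P(Z=1|X) is the true propensity score and m(X) is any (possibly misspecified) bounded function, then E[ Z·1{Y=k}/π(X) − ((Z−π(X))/π(X))·m(X) ] = P(Y¹=k). -/
open MeasureTheory ProbabilityTheory

/-- double robustness when the propensity model is correct. If `π(X)`
is the true propensity score and `m` is any bounded measurable (possibly
misspecified) outcome function, then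
`E[Z·1{Y=k}/π(X) − ((Z−π(X))/π(X))·m(X)] = P(Y¹=k)`. -/
theorem doubly_robust_propensity_correct {Ω 𝓧 : Type*} [MeasurableSpace Ω]
    [StandardBorelSpace Ω] [m𝓧 : MeasurableSpace 𝓧] {μ : Measure Ω}
    [IsProbabilityMeasure μ] {K : ℕ}
    (X : Ω → 𝓧) (Z : Ω → ℝ) (Y Y1 Y0 : Ω → Fin K) (π : 𝓧 → ℝ) (m : 𝓧 → ℝ) (δ : ℝ)
    (hX : Measurable X) (hZ : Measurable Z) (hY1 : Measurable Y1) (hY0 : Measurable Y0)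
    (hm : Measurable m) (hmbdd : ∃ C : ℝ, ∀ x, |m x| ≤ C)
    (hbin : ∀ ω, Z ω = 0 ∨ Z ω = 1)
    (hconsist : ∀ ω, Z ω = 1 → Y ω = Y1 ω)
    (hδ : 0 < δ) (hδ1 : δ < 1)
    (hpos : ∀ᵐ ω ∂μ, δ ≤ π (X ω) ∧ π (X ω) ≤ 1 - δ)
    (hprop : (fun ω => π (X ω)) =ᵐ[μ] μ[Z | MeasurableSpace.comap X m𝓧])
    (hignor : CondIndepFun (MeasurableSpace.comap X m𝓧) hX.comap_le
      (fun ω => (Y1 ω, Y0 ω)) Z μ)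
    (k : Fin K) :
    ∫ ω, Z ω * (if Y ω = k then (1 : ℝ) else 0) / π (X ω) -
        ((Z ω - π (X ω)) / π (X ω)) * m (X ω) ∂μ = (μ (Y1 ⁻¹' {k})).toReal := by
  classical
  obtain ⟨C₀, hC₀⟩ := hmbdd
  set C := max C₀ 0 with hCdef
  have hC : ∀ x, |m x| ≤ C := fun x => (hC₀ x).trans (le_max_left _ _)
  have hC0 : 0 ≤ C := le_max_right _ _
  have hle : MeasurableSpace.comap X m𝓧 ≤ ‹MeasurableSpace Ω› := hX.comap_le
  set p : Ω → ℝ := μ[Z | MeasurableSpace.comap X m𝓧] with hpdef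
  -- a.e. bounds for p
  have hppos : ∀ᵐ ω ∂μ, δ ≤ p ω ∧ p ω ≤ 1 - δ := by
    filter_upwards [hpos, hprop] with ω h1 h2
    rw [← h2]; exact h1
  -- measurability with respect to the comap σ-algebra
  have hXc : Measurable[MeasurableSpace.comap X m𝓧] X := fun s hs => ⟨s, hs, rfl⟩
  have hmXm : Measurable[MeasurableSpace.comap X m𝓧] (fun ω => m (X ω)) := hm.comp hXc
  have hp_sm : StronglyMeasurable[MeasurableSpace.comap X m𝓧] p := stronglyMeasurable_condExp
  have hp_meas : Measurable p := (hp_sm.mono hle).measurable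
  -- Z is integrable
  have hZ1 : ∀ ω, |Z ω| ≤ 1 := by
    intro ω; rcases hbin ω with h | h <;> simp [h]
  have hZint : Integrable Z μ :=
    (integrable_const (1 : ℝ)).mono' hZ.aestronglyMeasurable (ae_of_all _ hZ1)
  -- the key sets
  set T : Set Ω := Y1 ⁻¹' {k} with hTdef
  set S : Set Ω := Z ⁻¹' {1} with hSdef
  have hTmeas : MeasurableSet T := hY1 (measurableSet_singleton k)
  have hSmeas : MeasurableSet S := hZ (measurableSet_singleton 1)
  -- Z equals the indicator of S
  have hZind : Set.indicator S (fun _ => (1 : ℝ)) = Z := by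
    funext ω
    rcases hbin ω with h | h
    · have : ω ∉ S := by simp [hSdef, Set.mem_preimage, h]
      simp [Set.indicator_of_notMem this, h]
    · have : ω ∈ S := by simp [hSdef, Set.mem_preimage, h]
      simp [Set.indicator_of_mem this, h]
  -- the numerator equals the indicator of T ∩ S
  have hind : ∀ ω, Z ω * (if Y ω = k then (1 : ℝ) else 0)
      = Set.indicator (T ∩ S) (fun _ => (1 : ℝ)) ω := by
    intro ω
    rcases hbin ω with h | h
    · have : ω ∉ T ∩ S := by
        rintro ⟨-, hS'⟩
        simp only [hSdef, Set.mem_preimage, Set.mem_singleton_iff] at hS'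
        rw [hS'] at h; norm_num at h
      simp [Set.indicator_of_notMem this, h]
    · have hYk : Y ω = Y1 ω := hconsist ω h
      by_cases hk : Y1 ω = k
      · have : ω ∈ T ∩ S := ⟨by simp [hTdef, hk], by simp [hSdef, h]⟩
        simp [Set.indicator_of_mem this, h, hYk, hk]
      · have : ω ∉ T ∩ S := by
          rintro ⟨hT', -⟩
          exact hk (by simpa [hTdef] using hT')
        simp [Set.indicator_of_notMem this, h, hYk, hk]
  -- integrable indicators
  have hindTS : Integrable (Set.indicator (T ∩ S) (fun _ => (1 : ℝ))) μ :=
    (integrable_const (1 : ℝ)).indicator (hTmeas.inter hSmeas)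
  -- auxiliary functions
  set A : Ω → ℝ := fun ω => (p ω)⁻¹ * Set.indicator (T ∩ S) (fun _ => (1 : ℝ)) ω with hAdef
  set G : Ω → ℝ := fun ω => m (X ω) / p ω with hGdef
  have hG_sm : StronglyMeasurable[MeasurableSpace.comap X m𝓧] G :=
    (hmXm.div hp_sm.measurable).stronglyMeasurable
  have hG_bound : ∀ᵐ ω ∂μ, ‖G ω‖ ≤ C / δ := by
    filter_upwards [hppos] with ω hω
    obtain ⟨h1, _⟩ := hω
    have hp0 : 0 < p ω := lt_of_lt_of_le hδ h1
    rw [hGdef]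
    simp only [Real.norm_eq_abs, abs_div, abs_of_pos hp0]
    exact div_le_div₀ hC0 (hC _) hδ h1
  have hGmeas : Measurable G := (hm.comp hX).div hp_meas
  -- integrability of the pieces
  have hGZint : Integrable (G * Z) μ := by
    refine (integrable_const (C / δ * 1)).mono'
      ((hGmeas.mul hZ).aestronglyMeasurable) ?_
    filter_upwards [hG_bound] with ω h
    calc ‖(G * Z) ω‖ = ‖G ω‖ * ‖Z ω‖ := norm_mul _ _
      _ ≤ C / δ * 1 := mul_le_mul h (hZ1 ω) (norm_nonneg _) (div_nonneg hC0 hδ.le)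
  have hGpint : Integrable (G * p) μ := by
    refine (integrable_const (C / δ * 1)).mono'
      ((hGmeas.mul hp_meas).aestronglyMeasurable) ?_
    filter_upwards [hG_bound, hppos] with ω h hω
    obtain ⟨h1, h2⟩ := hω
    have hp1 : ‖p ω‖ ≤ 1 := by
      rw [Real.norm_eq_abs, abs_of_pos (lt_of_lt_of_le hδ h1)]; linarith
    calc ‖(G * p) ω‖ = ‖G ω‖ * ‖p ω‖ := norm_mul _ _
      _ ≤ C / δ * 1 := mul_le_mul h hp1 (norm_nonneg _) (div_nonneg hC0 hδ.le)
  have hAint : Integrable A μ := by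
    refine (integrable_const (δ⁻¹ * 1)).mono'
      ((hp_meas.inv.mul (measurable_const.indicator
        (hTmeas.inter hSmeas))).aestronglyMeasurable) ?_
    filter_upwards [hppos] with ω hω
    obtain ⟨h1, _⟩ := hω
    have hp0 : 0 < p ω := lt_of_lt_of_le hδ h1
    have h1' : ‖(p ω)⁻¹‖ ≤ δ⁻¹ := by
      rw [Real.norm_eq_abs, abs_of_pos (inv_pos.mpr hp0)]
      exact inv_anti₀ hδ h1
    have h2' : ‖Set.indicator (T ∩ S) (fun _ => (1 : ℝ)) ω‖ ≤ 1 := by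
      rw [Real.norm_eq_abs]
      rcases Set.indicator_eq_zero_or_self (T ∩ S) (fun _ => (1 : ℝ)) ω with h | h <;>
        simp [h]
    calc ‖A ω‖ = ‖(p ω)⁻¹‖ * ‖Set.indicator (T ∩ S) (fun _ => (1 : ℝ)) ω‖ := norm_mul _ _
      _ ≤ δ⁻¹ * 1 := mul_le_mul h1' h2' (norm_nonneg _) (by positivity)
  -- Step 1: rewrite the integral
  have hstep1 : ∫ ω, Z ω * (if Y ω = k then (1 : ℝ) else 0) / π (X ω) -
      ((Z ω - π (X ω)) / π (X ω)) * m (X ω) ∂μ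
      = ∫ ω, A ω - (G ω * Z ω - G ω * p ω) ∂μ := by
    refine integral_congr_ae ?_
    filter_upwards [hprop, hppos] with ω hπ hω
    obtain ⟨h1, _⟩ := hω
    have hp0 : p ω ≠ 0 := (lt_of_lt_of_le hδ h1).ne'
    rw [hind ω, hπ]
    simp only [hAdef, hGdef, ← hpdef]
    field_simp
  -- Step 2: the second part integrates to zero
  have hpull : μ[G * Z | MeasurableSpace.comap X m𝓧] =ᵐ[μ] G * p :=
    condExp_stronglyMeasurable_mul_of_bound hle hG_sm hZint (C / δ) hG_bound
  have hGZ_eq : ∫ ω, G ω * Z ω ∂μ = ∫ ω, G ω * p ω ∂μ := by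
    rw [show (∫ ω, G ω * Z ω ∂μ) = ∫ ω, (G * Z) ω ∂μ from rfl,
      ← integral_condExp hle (f := G * Z)]
    exact integral_congr_ae hpull
  -- Step 3: the first part, using conditional independence
  have hindS := hignor
  rw [condIndepFun_iff_condExp_inter_preimage_eq_mul (hY1.prodMk hY0) hZ] at hindS
  have hci := hindS (Prod.fst ⁻¹' {k}) {1}
    (measurable_fst (measurableSet_singleton k)) (measurableSet_singleton 1)
  have hpre : (fun ω => (Y1 ω, Y0 ω)) ⁻¹' (Prod.fst ⁻¹' {k}) = T := rfl
  rw [hpre] at hci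
  have hSp : (μ⟦S | MeasurableSpace.comap X m𝓧⟧) = p := by
    rw [hpdef, hSdef]
    rw [show Set.indicator (Z ⁻¹' {1}) (fun _ => (1 : ℝ)) = Z by rw [← hSdef]; exact hZind]
  have hpullA : μ[A | MeasurableSpace.comap X m𝓧] =ᵐ[μ]
      (fun ω => (p ω)⁻¹) * μ[Set.indicator (T ∩ S) (fun _ => (1 : ℝ)) |
        MeasurableSpace.comap X m𝓧] := by
    refine condExp_stronglyMeasurable_mul_of_bound hle (hp_sm.measurable.inv.stronglyMeasurable) hindTS δ⁻¹ ?_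
    filter_upwards [hppos] with ω hω
    obtain ⟨h1, _⟩ := hω
    rw [Real.norm_eq_abs, abs_of_pos (inv_pos.mpr (lt_of_lt_of_le hδ h1))]
    exact inv_anti₀ hδ h1
  have hA_eq : ∫ ω, A ω ∂μ = (μ T).toReal := by
    rw [← integral_condExp hle (f := A)]
    have heq : μ[A | MeasurableSpace.comap X m𝓧] =ᵐ[μ]
        μ⟦T | MeasurableSpace.comap X m𝓧⟧ := by
      have hTS : (μ⟦T ∩ S | MeasurableSpace.comap X m𝓧⟧) =ᵐ[μ]
          fun ω => (μ⟦T | MeasurableSpace.comap X m𝓧⟧) ω * p ω := by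
        refine hci.trans ?_
        rw [hSp]
      refine hpullA.trans ?_
      filter_upwards [hTS, hppos] with ω hω hω'
      obtain ⟨h1, _⟩ := hω'
      have hp0 : p ω ≠ 0 := (lt_of_lt_of_le hδ h1).ne'
      simp only [Pi.mul_apply]
      rw [hω]
      field_simp
    rw [integral_congr_ae heq, integral_condExp hle]
    exact integral_indicator_one hTmeas
  -- put everything together
  rw [hstep1]
  have hint2 : Integrable (fun ω => G ω * Z ω - G ω * p ω) μ := hGZint.sub hGpint
  rw [integral_sub hAint hint2]
  have hzero : ∫ ω, G ω * Z ω - G ω * p ω ∂μ = 0 := by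
    have h1 : ∫ ω, G ω * Z ω - G ω * p ω ∂μ = (∫ ω, G ω * Z ω ∂μ) - ∫ ω, G ω * p ω ∂μ :=
      integral_sub (by exact hGZint) (by exact hGpint)
    rw [h1, hGZ_eq, sub_self]
  rw [hzero, sub_zero, hA_eq]
end

section
/- Double robustness (outcome model correct): if m₁ₖ(X) = P(Y¹=k | X) is the true conditional outcome probability and e(X) is any measurable function with δ ≤ e(X) ≤ 1−δ (possibly not the true propensity score), then E[ Z·1{Y=k}/e(X) − ((Z−e(X))/e(X))·m₁ₖ(X) ] = P(Y¹=k). -/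
open MeasureTheory ProbabilityTheory

/-- Pull-out helper: for `m`-strongly-measurable bounded `f` and integrable `g`,
`∫ f·g = ∫ f·E[g|m]`. -/
private lemma integral_mul_eq_integral_mul_condexp' {Ω : Type*} {m m0 : MeasurableSpace Ω}
    (hm : m ≤ m0) {μ : Measure Ω} [IsFiniteMeasure μ] {f g : Ω → ℝ}
    (hf : StronglyMeasurable[m] f) {c : ℝ} (hfb : ∀ᵐ x ∂μ, ‖f x‖ ≤ c)
    (hg : Integrable g μ) :
    ∫ x, f x * g x ∂μ = ∫ x, f x * (μ[g|m]) x ∂μ := by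
  have h1 : Integrable (f * g) μ := hg.bdd_mul (hf.mono hm).aestronglyMeasurable hfb
  calc ∫ x, f x * g x ∂μ = ∫ x, (μ[f * g|m]) x ∂μ := (integral_condExp hm).symm
    _ = ∫ x, f x * (μ[g|m]) x ∂μ :=
      integral_congr_ae (condExp_stronglyMeasurable_mul_of_bound hm hf hg c hfb)

/-- double robustness when the outcome model is correct. If
`m₁ₖ(X)` is a version of `P(Y¹=k | X)` and `e` is any measurable function with
`δ ≤ e ≤ 1-δ` (possibly not the true propensity score), then
`E[Z·1{Y=k}/e(X) − ((Z−e(X))/e(X))·m₁ₖ(X)] = P(Y¹=k)`. -/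
theorem doubly_robust_outcome_correct {Ω 𝓧 : Type*} [MeasurableSpace Ω]
    [StandardBorelSpace Ω] [m𝓧 : MeasurableSpace 𝓧] {μ : Measure Ω}
    [IsProbabilityMeasure μ] {K : ℕ}
    (X : Ω → 𝓧) (Z : Ω → ℝ) (Y Y1 Y0 : Ω → Fin K) (π e m1k : 𝓧 → ℝ) (δ : ℝ)
    (hX : Measurable X) (hZ : Measurable Z) (hY1 : Measurable Y1) (hY0 : Measurable Y0)
    (he : Measurable e) (hm1k : Measurable m1k)
    (hbin : ∀ ω, Z ω = 0 ∨ Z ω = 1)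
    (hconsist : ∀ ω, Z ω = 1 → Y ω = Y1 ω)
    (hδ : 0 < δ) (hδhalf : δ < 1 / 2)
    (hebound : ∀ x, δ ≤ e x ∧ e x ≤ 1 - δ)
    (hpos : ∀ᵐ ω ∂μ, δ ≤ π (X ω) ∧ π (X ω) ≤ 1 - δ)
    (hprop : (fun ω => π (X ω)) =ᵐ[μ] μ[Z | MeasurableSpace.comap X m𝓧])
    (hignor : CondIndepFun (MeasurableSpace.comap X m𝓧) hX.comap_le
      (fun ω => (Y1 ω, Y0 ω)) Z μ)
    (k : Fin K)
    (houtcome : (fun ω => m1k (X ω)) =ᵐ[μ]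
      μ[fun ω => if Y1 ω = k then (1 : ℝ) else 0 | MeasurableSpace.comap X m𝓧]) :
    ∫ ω, Z ω * (if Y ω = k then (1 : ℝ) else 0) / e (X ω) -
        ((Z ω - e (X ω)) / e (X ω)) * m1k (X ω) ∂μ = (μ (Y1 ⁻¹' {k})).toReal := by
  have hm := hX.comap_le (α := Ω)
  have hXm : Measurable[MeasurableSpace.comap X m𝓧] X := fun s hs => ⟨s, hs, rfl⟩
  set iY : Ω → ℝ := fun ω => if Y1 ω = k then (1 : ℝ) else 0 with hiYdef
  have hiY : Measurable iY := by
    refine Measurable.ite ?_ measurable_const measurable_const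
    exact hY1 (measurableSet_singleton k)
  have hiY_bd : ∀ ω, ‖iY ω‖ ≤ 1 := by
    intro ω; simp only [iY]; split <;> simp
  have hiY_int : Integrable iY μ :=
    (integrable_const (1 : ℝ)).mono' hiY.aestronglyMeasurable (.of_forall hiY_bd)
  have hZ_bd : ∀ ω, ‖Z ω‖ ≤ 1 := by
    intro ω; rcases hbin ω with h | h <;> simp [h]
  have hZ_int : Integrable Z μ :=
    (integrable_const (1 : ℝ)).mono' hZ.aestronglyMeasurable (.of_forall hZ_bd)
  have hZiY_int : Integrable (fun ω => Z ω * iY ω) μ := by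
    refine (integrable_const (1 : ℝ)).mono' (hZ.mul hiY).aestronglyMeasurable
      (.of_forall fun ω => ?_)
    calc ‖Z ω * iY ω‖ = ‖Z ω‖ * ‖iY ω‖ := norm_mul _ _
      _ ≤ 1 * 1 := mul_le_mul (hZ_bd ω) (hiY_bd ω) (norm_nonneg _) zero_le_one
      _ = 1 := one_mul 1
  -- e(X) is positive, its inverse bounded
  have hepos : ∀ x, 0 < e x := fun x => lt_of_lt_of_le hδ (hebound x).1
  have hene0 : ∀ x, e x ≠ 0 := fun x => (hepos x).ne'
  have heinv_bd : ∀ ω, ‖(e (X ω))⁻¹‖ ≤ δ⁻¹ := by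
    intro ω
    rw [Real.norm_eq_abs, abs_of_pos (inv_pos.mpr (hepos (X ω)))]
    exact inv_anti₀ hδ (hebound (X ω)).1
  have heinv_sm : StronglyMeasurable[MeasurableSpace.comap X m𝓧] fun ω => (e (X ω))⁻¹ :=
    ((he.comp hXm).inv).stronglyMeasurable
  -- m1k(X) is a.e. bounded by 1
  have hcond_le : μ[iY|MeasurableSpace.comap X m𝓧] ≤ᵐ[μ] fun _ => (1 : ℝ) := by
    have h1 : μ[iY|MeasurableSpace.comap X m𝓧] ≤ᵐ[μ] μ[(fun _ => (1 : ℝ))|MeasurableSpace.comap X m𝓧] :=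
      condExp_mono hiY_int (integrable_const 1)
        (.of_forall fun ω => by simp only [iY]; split <;> norm_num)
    refine h1.trans ?_
    rw [condExp_const hm]
  have hcond_nn : 0 ≤ᵐ[μ] μ[iY|MeasurableSpace.comap X m𝓧] :=
    condExp_nonneg (.of_forall fun ω => by simp only [iY]; split <;> norm_num)
  have hm1k_bd : ∀ᵐ ω ∂μ, ‖m1k (X ω)‖ ≤ 1 := by
    filter_upwards [houtcome, hcond_le, hcond_nn] with ω h1 h2 h3
    rw [Real.norm_eq_abs, h1, abs_of_nonneg h3]
    exact h2
  have hm1kX_sm : StronglyMeasurable[MeasurableSpace.comap X m𝓧] fun ω => m1k (X ω) :=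
    (hm1k.comp hXm).stronglyMeasurable
  have hm1kX_int : Integrable (fun ω => m1k (X ω)) μ :=
    (integrable_const (1 : ℝ)).mono' ((hm1k.comp hX).aestronglyMeasurable) hm1k_bd
  -- conditional independence of Y1 and Z given X
  have hci : CondIndepFun (MeasurableSpace.comap X m𝓧) hm (Prod.fst ∘ fun ω => (Y1 ω, Y0 ω)) Z μ :=
    hignor.comp measurable_fst measurable_id
  have hfmeas : Measurable (Prod.fst ∘ fun ω => (Y1 ω, Y0 ω)) :=
    measurable_fst.comp (hY1.prodMk hY0)
  have hmul := (condIndepFun_iff_condExp_inter_preimage_eq_mul hfmeas hZ).mp hci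
    {k} {1} (measurableSet_singleton k) (measurableSet_singleton 1)
  -- identify the indicators
  have hind1 : Set.indicator ((Prod.fst ∘ fun ω => (Y1 ω, Y0 ω)) ⁻¹' {k} ∩ Z ⁻¹' {1})
      (fun _ => (1 : ℝ)) = fun ω => Z ω * iY ω := by
    funext ω
    rcases hbin ω with h | h
    · by_cases hk : Y1 ω = k <;>
        simp [Set.indicator, h, hk, iY]
    · by_cases hk : Y1 ω = k <;>
        simp [Set.indicator, h, hk, iY]
  have hind2 : Set.indicator ((Prod.fst ∘ fun ω => (Y1 ω, Y0 ω)) ⁻¹' {k})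
      (fun _ => (1 : ℝ)) = iY := by
    funext ω
    by_cases hk : Y1 ω = k <;> simp [Set.indicator, hk, iY]
  have hind3 : Set.indicator (Z ⁻¹' {1}) (fun _ => (1 : ℝ)) = Z := by
    funext ω
    rcases hbin ω with h | h <;> simp [Set.indicator, h]
  rw [hind1, hind2, hind3] at hmul
  -- condexp of Z·iY equals m1k(X)·π(X) a.e.
  have hkey : μ[fun ω => Z ω * iY ω|MeasurableSpace.comap X m𝓧] =ᵐ[μ] fun ω => m1k (X ω) * π (X ω) := by
    filter_upwards [hmul, houtcome, hprop] with ω h1 h2 h3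
    rw [h1, ← h2, ← h3]
  -- rewrite the integrand
  have hptwise : ∀ ω, Z ω * (if Y ω = k then (1 : ℝ) else 0) / e (X ω) -
      ((Z ω - e (X ω)) / e (X ω)) * m1k (X ω)
      = (e (X ω))⁻¹ * (Z ω * iY ω)
        - ((e (X ω))⁻¹ * m1k (X ω)) * Z ω + m1k (X ω) := by
    intro ω
    have hYY : Z ω * (if Y ω = k then (1 : ℝ) else 0) = Z ω * iY ω := by
      rcases hbin ω with h | h
      · simp [h]
      · simp [iY, h, hconsist ω h]
    have he1 : e (X ω) * (e (X ω))⁻¹ = 1 := mul_inv_cancel₀ (hene0 _)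
    rw [hYY, div_eq_mul_inv, div_eq_mul_inv]
    linear_combination m1k (X ω) * he1
  simp only [hptwise]
  -- integrability of the three pieces
  have hint1 : Integrable (fun ω => (e (X ω))⁻¹ * (Z ω * iY ω)) μ := by
    refine (integrable_const (δ⁻¹ : ℝ)).mono'
      (((he.comp hX).inv.mul (hZ.mul hiY)).aestronglyMeasurable)
      (.of_forall fun ω => ?_)
    calc ‖(e (X ω))⁻¹ * (Z ω * iY ω)‖ = ‖(e (X ω))⁻¹‖ * ‖Z ω * iY ω‖ := norm_mul _ _
      _ ≤ δ⁻¹ * 1 := by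
          refine mul_le_mul (heinv_bd ω) ?_ (norm_nonneg _) (by positivity)
          calc ‖Z ω * iY ω‖ = ‖Z ω‖ * ‖iY ω‖ := norm_mul _ _
            _ ≤ 1 * 1 := mul_le_mul (hZ_bd ω) (hiY_bd ω) (norm_nonneg _) zero_le_one
            _ = 1 := one_mul 1
      _ = δ⁻¹ := mul_one _
  have hbd2 : ∀ᵐ ω ∂μ, ‖(e (X ω))⁻¹ * m1k (X ω)‖ ≤ δ⁻¹ := by
    filter_upwards [hm1k_bd] with ω h1
    calc ‖(e (X ω))⁻¹ * m1k (X ω)‖ = ‖(e (X ω))⁻¹‖ * ‖m1k (X ω)‖ := norm_mul _ _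
      _ ≤ δ⁻¹ * 1 := mul_le_mul (heinv_bd ω) h1 (norm_nonneg _) (by positivity)
      _ = δ⁻¹ := mul_one _
  have hint2 : Integrable (fun ω => ((e (X ω))⁻¹ * m1k (X ω)) * Z ω) μ := by
    refine (integrable_const (δ⁻¹ : ℝ)).mono'
      ((((he.comp hX).inv.mul (hm1k.comp hX)).mul hZ).aestronglyMeasurable) ?_
    filter_upwards [hbd2] with ω h1
    calc ‖(e (X ω))⁻¹ * m1k (X ω) * Z ω‖
        = ‖(e (X ω))⁻¹ * m1k (X ω)‖ * ‖Z ω‖ := norm_mul _ _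
      _ ≤ δ⁻¹ * 1 := mul_le_mul h1 (hZ_bd ω) (norm_nonneg _) (by positivity)
      _ = δ⁻¹ := mul_one _
  -- split the integral
  have hintsub : Integrable (fun ω => (e (X ω))⁻¹ * (Z ω * iY ω)
      - (e (X ω))⁻¹ * m1k (X ω) * Z ω) μ := hint1.sub hint2
  rw [integral_add hintsub hm1kX_int, integral_sub hint1 hint2]
  -- first piece
  have hI1 : ∫ ω, (e (X ω))⁻¹ * (Z ω * iY ω) ∂μ
      = ∫ ω, (e (X ω))⁻¹ * (m1k (X ω) * π (X ω)) ∂μ := by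
    rw [integral_mul_eq_integral_mul_condexp' hm heinv_sm (.of_forall heinv_bd) hZiY_int]
    exact integral_congr_ae (Filter.EventuallyEq.mul (Filter.EventuallyEq.rfl) hkey)
  -- second piece
  have hI2 : ∫ ω, ((e (X ω))⁻¹ * m1k (X ω)) * Z ω ∂μ
      = ∫ ω, (e (X ω))⁻¹ * (m1k (X ω) * π (X ω)) ∂μ := by
    have hsm2 : StronglyMeasurable[MeasurableSpace.comap X m𝓧]
        fun ω => (e (X ω))⁻¹ * m1k (X ω) := heinv_sm.mul hm1kX_sm
    rw [integral_mul_eq_integral_mul_condexp' hm hsm2 hbd2 hZ_int]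
    refine integral_congr_ae ?_
    filter_upwards [hprop] with ω h1
    rw [← h1]; ring
  rw [hI1, hI2, sub_self, zero_add]
  -- third piece
  rw [integral_congr_ae houtcome, integral_condExp hm]
  have : iY = Set.indicator (Y1 ⁻¹' {k}) (fun _ => (1 : ℝ)) := by
    funext ω; by_cases hk : Y1 ω = k <;> simp [Set.indicator, hk, iY]
  rw [show (fun ω => if Y1 ω = k then (1:ℝ) else 0) = iY from rfl, this,
    integral_indicator_const _ (hY1 (measurableSet_singleton k))]
  simp [Measure.real]
end

section
/- D is bilinear and monotone: if probability vector p₁' is obtained from p₁ by moving mass ε > 0 from category j to a higher category j' > j, then D(p₁', p₀) ≥ D(p₁, p₀), with equality if and only if p₀ places no mass on the interval {j, j+1, …, j'}. -/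
open Finset

lemma sum_update_mul {K : ℕ} (f g : Fin K → ℝ) (a : Fin K) (b : ℝ) :
    ∑ k, Function.update f a b k * g k = (∑ k, f k * g k) + (b - f a) * g a := by
  have h : ∀ k, Function.update f a b k * g k
      = f k * g k + (if k = a then (b - f a) * g a else 0) := by
    intro k
    rcases eq_or_ne k a with rfl | h
    · simp [Function.update_self]; ring
    · simp [Function.update_of_ne h, h]
  simp [h, Finset.sum_add_distrib]

/-- moving mass `ε > 0` from category `j` to a higher category `j' > j`
cannot decrease the DOOR probability, with equality iff `p₀` places no mass on
`{j, j+1, …, j'}`. -/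
theorem door_monotone_mass_shift {K : ℕ} (p1 p0 : Fin K → ℝ) (j j' : Fin K) (ε : ℝ)
    (hε : 0 < ε) (hjj' : j < j') (hshift : 0 ≤ p1 j - ε)
    (h1nonneg : ∀ k, 0 ≤ p1 k) (h0nonneg : ∀ k, 0 ≤ p0 k)
    (h1sum : ∑ k, p1 k = 1) (h0sum : ∑ k, p0 k = 1) :
    DOOR (Function.update (Function.update p1 j (p1 j - ε)) j' (p1 j' + ε)) p0 ≥ DOOR p1 p0 ∧
      (DOOR (Function.update (Function.update p1 j (p1 j - ε)) j' (p1 j' + ε)) p0 = DOOR p1 p0 ↔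
        ∀ l : Fin K, j ≤ l → l ≤ j' → p0 l = 0) := by
  have hne : j' ≠ j := ne_of_gt hjj'
  set T : ℝ := (1/2) * p0 j + (∑ l ∈ Finset.Ioo j j', p0 l) + (1/2) * p0 j' with hT
  -- decompose Iio j' as Iio j ∪ Ico j j'
  have hIio : Finset.Iio j' = Finset.Iio j ∪ Finset.Ico j j' := by
    ext x
    simp only [Finset.mem_Iio, Finset.mem_union, Finset.mem_Ico, Fin.lt_def, Fin.le_def]
    omega
  have hdisj : Disjoint (Finset.Iio j) (Finset.Ico j j') := by
    rw [Finset.disjoint_left]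
    intro x hx hx'
    simp only [Finset.mem_Iio, Fin.lt_def] at hx
    simp only [Finset.mem_Ico, Fin.lt_def, Fin.le_def] at hx'
    omega
  have hIco : Finset.Ico j j' = insert j (Finset.Ioo j j') := (Finset.Ioo_insert_left hjj').symm
  have hSdiff : (∑ l ∈ Finset.Iio j', p0 l) - (∑ l ∈ Finset.Iio j, p0 l)
      = p0 j + ∑ l ∈ Finset.Ioo j j', p0 l := by
    rw [hIio, Finset.sum_union hdisj, hIco, Finset.sum_insert (by simp)]
    ring
  -- main computation
  have hup : (Function.update p1 j (p1 j - ε)) j' = p1 j' := Function.update_of_ne hne _ _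
  have key : DOOR (Function.update (Function.update p1 j (p1 j - ε)) j' (p1 j' + ε)) p0
      = DOOR p1 p0 + ε * T := by
    unfold DOOR
    rw [sum_update_mul, sum_update_mul, hup, sum_update_mul, sum_update_mul]
    simp only [hup]
    rw [hT]
    linear_combination ε * hSdiff
  have hTnn : 0 ≤ T := by
    rw [hT]
    have h1 : 0 ≤ ∑ l ∈ Finset.Ioo j j', p0 l :=
      Finset.sum_nonneg fun l _ => h0nonneg l
    have := h0nonneg j
    have := h0nonneg j'
    linarith
  constructor
  · rw [key]
    nlinarith
  · rw [key]
    constructor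
    · intro h
      have hT0 : T = 0 := by nlinarith
      rw [hT] at hT0
      have h1 : 0 ≤ ∑ l ∈ Finset.Ioo j j', p0 l :=
        Finset.sum_nonneg fun l _ => h0nonneg l
      have hj0 : p0 j = 0 := by have := h0nonneg j; have := h0nonneg j'; linarith
      have hj'0 : p0 j' = 0 := by have := h0nonneg j; have := h0nonneg j'; linarith
      have hsum0 : ∑ l ∈ Finset.Ioo j j', p0 l = 0 := by
        have := h0nonneg j; have := h0nonneg j'; linarith
      have hall : ∀ l ∈ Finset.Ioo j j', p0 l = 0 :=
        (Finset.sum_eq_zero_iff_of_nonneg fun l _ => h0nonneg l).mp hsum0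
      intro l hjl hlj'
      rcases eq_or_lt_of_le hjl with rfl | hjl
      · exact hj0
      rcases eq_or_lt_of_le hlj' with rfl | hlj'
      · exact hj'0
      exact hall l (Finset.mem_Ioo.mpr ⟨hjl, hlj'⟩)
    · intro h
      have hT0 : T = 0 := by
        rw [hT]
        have hj0 : p0 j = 0 := h j le_rfl (le_of_lt hjj')
        have hj'0 : p0 j' = 0 := h j' (le_of_lt hjj') le_rfl
        have hsum0 : ∑ l ∈ Finset.Ioo j j', p0 l = 0 :=
          Finset.sum_eq_zero fun l hl => by
            rcases Finset.mem_Ioo.mp hl with ⟨h1, h2⟩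
            exact h l (le_of_lt h1) (le_of_lt h2)
        rw [hj0, hj'0, hsum0]; ring
      rw [hT0]; ring
end
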